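/- Let q ≥ 2 be an integer, let g ≥ 0 be an integer, and let ω_1, …, ω_{2g} be complex numbers with |ω_j| = √q for all j. Let (B_m)_{m≥1} be nonnegative integers such that for every m ≥ 1, ∑_{d ∣ m} d·B_d = q^m + 1 − ∑_{j=1}^{2g} ω_j^m. Then for every complex number t with |t| < 1/q, the infinite product ∏_{m≥1}(1 − t^m)^(−B_m) converges (is multipliable) and equals ∏_{j=1}^{2g}(1 − ω_j·t) / ((1 − t)(1 − q·t)). -/

import Mathlib

open Complex Finset

lemma aux_one_sub_ne {z : ℂ} (h : ‖z‖ < 1) : 1 - z ≠ 0 := by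
  intro h0
  rw [sub_eq_zero] at h0
  rw [← h0] at h
  simp at h

set_option maxHeartbeats 2000000 in
/-- Let `q ≥ 2` be an integer, `g ≥ 0`, and `ω_1, …, ω_{2g}` complex numbers
with `|ω_j| = √q`. If the nonnegative integers `B_m` satisfy
`∑_{d ∣ m} d·B_d = q^m + 1 − ∑_j ω_j^m` for every `m ≥ 1`, then for every complex `t`
with `|t| < 1/q` the infinite product `∏_{m≥1} (1 − t^m)^(−B_m)` is multipliable and
equals `∏_j (1 − ω_j t) / ((1 − t)(1 − q t))`.
(Products over `m ≥ 1` are indexed by `m = k + 1`, `k : ℕ`.) -/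
theorem zeta_product_formula (q : ℕ) (hq : 2 ≤ q) (g : ℕ)
    (ω : Fin (2 * g) → ℂ) (hω : ∀ j, ‖ω j‖ = Real.sqrt q)
    (B : ℕ → ℕ)
    (hB : ∀ m : ℕ, 1 ≤ m →
      ((∑ d ∈ m.divisors, d * B d : ℕ) : ℂ) = (q : ℂ) ^ m + 1 - ∑ j, ω j ^ m)
    (t : ℂ) (ht : ‖t‖ < 1 / q) :
    Multipliable (fun k : ℕ => (1 - t ^ (k + 1)) ^ (-(B (k + 1) : ℤ))) ∧
    ∏' k : ℕ, (1 - t ^ (k + 1)) ^ (-(B (k + 1) : ℤ)) =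
      (∏ j, (1 - ω j * t)) / ((1 - t) * (1 - (q : ℂ) * t)) := by
  have hq0 : (0:ℝ) < q := by positivity
  have hq1 : (1:ℝ) ≤ q := by exact_mod_cast Nat.one_le_of_lt hq
  set r : ℝ := ‖t‖ with hrdef
  have hr0 : 0 ≤ r := norm_nonneg t
  have hqr : (q:ℝ) * r < 1 := by
    rw [lt_div_iff₀ hq0] at ht
    linarith [ht]
  have hqr0 : 0 ≤ (q:ℝ) * r := by positivity
  have hr1 : r < 1 := lt_of_le_of_lt (by nlinarith) hqr
  have hsq : Real.sqrt q ≤ q := by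
    calc Real.sqrt q ≤ Real.sqrt ((q:ℝ)^2) := Real.sqrt_le_sqrt (by nlinarith)
      _ = q := Real.sqrt_sq hq0.le
  -- nonvanishing facts
  have hne_t : (1:ℂ) - t ≠ 0 := aux_one_sub_ne hr1
  have hne_qt : (1:ℂ) - (q:ℂ) * t ≠ 0 := by
    apply aux_one_sub_ne; rw [norm_mul, Complex.norm_natCast]; exact hqr
  have hωt : ∀ j, ‖ω j * t‖ < 1 := by
    intro j
    rw [norm_mul, hω j]
    calc Real.sqrt q * r ≤ (q:ℝ) * r := by nlinarith
      _ < 1 := hqr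
  have hne_ωt : ∀ j, (1:ℂ) - ω j * t ≠ 0 := fun j => aux_one_sub_ne (hωt j)
  have htm : ∀ m : ℕ, 1 ≤ m → ‖t ^ m‖ < 1 := by
    intro m hm
    rw [norm_pow]
    exact pow_lt_one₀ hr0 hr1 (by omega)
  have hne_tm : ∀ m : ℕ, 1 ≤ m → (1:ℂ) - t ^ m ≠ 0 := fun m hm => aux_one_sub_ne (htm m hm)
  -- the double-indexed family
  set a : ℕ × ℕ → ℂ :=
    fun p => if p.1 = 0 ∨ p.2 = 0 then 0 else (B p.1 : ℂ) * t ^ (p.1 * p.2) / p.2 with hadef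
  -- bound on B
  have hBbound : ∀ m : ℕ, 1 ≤ m → (B m : ℝ) * r ^ m ≤ (2*g+2) * ((q:ℝ)*r)^m := by
    intro m hm
    have h1 : (m * B m : ℕ) ≤ ∑ d ∈ m.divisors, d * B d := by
      apply Finset.single_le_sum (f := fun d => d * B d) (fun i _ => Nat.zero_le _)
      exact Nat.mem_divisors_self m (by omega)
    have h2 : ((∑ d ∈ m.divisors, d * B d : ℕ) : ℝ) ≤ (2*g+2) * (q:ℝ)^m := by
      have := hB m hm
      have habs : ((∑ d ∈ m.divisors, d * B d : ℕ) : ℝ)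
          = ‖(((∑ d ∈ m.divisors, d * B d : ℕ) : ℂ))‖ := by
        rw [Complex.norm_natCast]
      rw [habs, this]
      have h3 : ‖(q:ℂ)^m + 1 - ∑ j, ω j ^ m‖
          ≤ (q:ℝ)^m + 1 + 2*g*(Real.sqrt q)^m := by
        calc ‖(q:ℂ)^m + 1 - ∑ j, ω j ^ m‖
            ≤ ‖(q:ℂ)^m + 1‖ + ‖∑ j, ω j ^ m‖ := norm_sub_le _ _
          _ ≤ (‖(q:ℂ)^m‖ + ‖(1:ℂ)‖) + ∑ j : Fin (2*g), ‖ω j ^ m‖ :=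
              add_le_add (norm_add_le _ _) (norm_sum_le _ _)
          _ = (q:ℝ)^m + 1 + 2*g*(Real.sqrt q)^m := by
              simp only [norm_pow, Complex.norm_natCast, hω, norm_one,
                Finset.sum_const, Finset.card_univ, Fintype.card_fin, nsmul_eq_mul]
              push_cast
              ring
      have h4 : (Real.sqrt q)^m ≤ (q:ℝ)^m := pow_le_pow_left₀ (Real.sqrt_nonneg _) hsq m
      have h5 : (1:ℝ) ≤ (q:ℝ)^m := by
        calc (1:ℝ) = 1^m := (one_pow m).symm
          _ ≤ (q:ℝ)^m := pow_le_pow_left₀ (by norm_num) hq1 m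
      calc ‖(q:ℂ)^m + 1 - ∑ j, ω j ^ m‖ ≤ (q:ℝ)^m + 1 + 2*g*(Real.sqrt q)^m := h3
        _ ≤ (q:ℝ)^m + (q:ℝ)^m + 2*g*(q:ℝ)^m := by nlinarith [Real.sqrt_nonneg (q:ℝ)]
        _ = (2*g+2) * (q:ℝ)^m := by ring
    have h6 : (B m : ℝ) ≤ (2*g+2) * (q:ℝ)^m := by
      have hmB : (B m : ℝ) ≤ ((m * B m : ℕ) : ℝ) := by
        have hm1 : (1:ℝ) ≤ (m:ℝ) := by exact_mod_cast hm
        have hB0 : (0:ℝ) ≤ (B m : ℝ) := Nat.cast_nonneg _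
        push_cast
        nlinarith
      calc (B m : ℝ) ≤ ((m * B m : ℕ):ℝ) := hmB
        _ ≤ ((∑ d ∈ m.divisors, d * B d : ℕ):ℝ) := by exact_mod_cast h1
        _ ≤ (2*g+2) * (q:ℝ)^m := h2
    calc (B m : ℝ) * r ^ m ≤ ((2*g+2) * (q:ℝ)^m) * r^m := by
          apply mul_le_mul_of_nonneg_right h6 (by positivity)
      _ = (2*g+2) * ((q:ℝ)*r)^m := by rw [mul_pow]; ring
  -- summability of the coefficients
  have hgeo0 : Summable (fun m : ℕ => (2*(g:ℝ)+2) * ((q:ℝ)*r)^m) :=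
    (summable_geometric_of_lt_one hqr0 hqr).mul_left _
  have hgeo1 : Summable (fun m : ℕ => (2*(g:ℝ)+2) * ((q:ℝ)*r)^(m+1)) :=
    (summable_nat_add_iff 1).mpr hgeo0
  have hw1 : Summable (fun m : ℕ => (B (m+1) : ℝ) * r ^ (m+1)) :=
    Summable.of_nonneg_of_le (fun n => by positivity)
      (fun n => by exact_mod_cast hBbound (n+1) (by omega)) hgeo1
  have hw : Summable (fun m : ℕ => (B m : ℝ) * r ^ m) := (summable_nat_add_iff 1).mp hw1
  have hgeo : Summable (fun k : ℕ => r ^ (k - 1)) := by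
    apply (summable_nat_add_iff 1).mp
    simpa using summable_geometric_of_lt_one hr0 hr1
  have hanorm : ∀ p : ℕ × ℕ, ‖a p‖ ≤ ((B p.1 : ℝ) * r ^ p.1) * r ^ (p.2 - 1) := by
    rintro ⟨m, k⟩
    rcases eq_or_ne m 0 with rfl | hm
    · simp only [hadef, true_or, if_pos, eq_self_iff_true]
      simp only [norm_zero]
      positivity
    rcases eq_or_ne k 0 with rfl | hk
    · simp only [hadef, or_true, if_pos, eq_self_iff_true]
      simp only [norm_zero]
      positivity
    have hm1 : 1 ≤ m := Nat.one_le_iff_ne_zero.mpr hm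
    have hk1 : 1 ≤ k := Nat.one_le_iff_ne_zero.mpr hk
    have hk1' : (1:ℝ) ≤ (k:ℝ) := by exact_mod_cast hk1
    simp only [hadef]
    rw [if_neg (by tauto)]
    rw [norm_div, norm_mul, norm_pow, Complex.norm_natCast, ← hrdef,
      Complex.norm_natCast]
    have hfrac : (B m : ℝ) * r ^ (m * k) / (k:ℝ) ≤ (B m : ℝ) * r ^ (m * k) := by
      apply div_le_self (by positivity) hk1'
    refine hfrac.trans ?_
    have hexp : m + (k - 1) ≤ m * k := by
      obtain ⟨m', rfl⟩ : ∃ m', m = m' + 1 := ⟨m - 1, by omega⟩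
      obtain ⟨k', rfl⟩ : ∃ k', k = k' + 1 := ⟨k - 1, by omega⟩
      simp only [Nat.add_sub_cancel]
      nlinarith
    have hpow : r ^ (m * k) ≤ r ^ (m + (k - 1)) :=
      pow_le_pow_of_le_one hr0 hr1.le hexp
    calc (B m : ℝ) * r ^ (m * k) ≤ (B m : ℝ) * r ^ (m + (k - 1)) := by
          apply mul_le_mul_of_nonneg_left hpow (by positivity)
      _ = ((B m : ℝ) * r ^ m) * r ^ (k - 1) := by rw [pow_add]; ring
  have hA : Summable a :=
    Summable.of_norm_bounded
      (hw.mul_of_nonneg hgeo (fun m => by positivity) (fun k => by positivity)) hanorm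
  set S : ℂ := ∑' p, a p with hSdef
  have haS : HasSum a S := hA.hasSum
  -- row sums
  set c : ℕ → ℂ := fun m => if m = 0 then 0 else -((B m : ℂ) * Complex.log (1 - t ^ m)) with hcdef
  have hrow : ∀ m, HasSum (fun k => a (m, k)) (c m) := by
    intro m
    rcases eq_or_ne m 0 with rfl | hm
    · have : (fun k : ℕ => a (0, k)) = fun _ => 0 := by
        funext k; simp [hadef]
      rw [this, hcdef]
      simpa using hasSum_zero
    · have hm1 : 1 ≤ m := Nat.one_le_iff_ne_zero.mpr hm
      have hz : ‖t ^ m‖ < 1 := by exact htm m hm1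
      have H := (Complex.hasSum_taylorSeries_neg_log hz).mul_left (B m : ℂ)
      have hfun : (fun k : ℕ => (B m : ℂ) * ((t ^ m) ^ k / k)) = fun k => a (m, k) := by
        funext k
        rcases eq_or_ne k 0 with rfl | hk
        · simp [hadef]
        · simp only [hadef]
          rw [if_neg (by tauto), ← pow_mul]
          ring
      rw [hfun] at H
      have : c m = (B m : ℂ) * -Complex.log (1 - t ^ m) := by
        rw [hcdef]; simp only [if_neg hm]; ring
      rw [this]
      exact H
  have hcS : HasSum c S := haS.prod_fiberwise hrow
  -- column (fiberwise by the product) sums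
  have hcol := haS.tsum_fiberwise (fun p : ℕ × ℕ => p.1 * p.2)
  set F : ℕ → ℂ :=
    fun n => if n = 0 then 0 else ((q:ℂ)^n + 1 - ∑ j, ω j ^ n) * (t^n / n) with hFdef
  have hfib : (fun n : ℕ => ∑' p : (fun p : ℕ × ℕ => p.1 * p.2) ⁻¹' {n}, a p) = F := by
    funext n
    rcases eq_or_ne n 0 with rfl | hn
    · rw [hFdef]
      simp only [if_pos rfl, ite_true]
      convert tsum_zero with p
      obtain ⟨⟨p1, p2⟩, hp⟩ := p
      have hp0 : p1 * p2 = 0 := hp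
      have : p1 = 0 ∨ p2 = 0 := Nat.mul_eq_zero.mp hp0
      simp [hadef, this]
    · have hset : (fun p : ℕ × ℕ => p.1 * p.2) ⁻¹' {n} = ↑(n.divisorsAntidiagonal) := by
        ext p
        simp [Nat.mem_divisorsAntidiagonal, hn]
      rw [hset, Finset.tsum_subtype' (n.divisorsAntidiagonal) a]
      have step : ∀ p ∈ n.divisorsAntidiagonal, a p = ((p.1 * B p.1 : ℕ) : ℂ) * (t ^ n / n) := by
        intro p hp
        obtain ⟨hpn, hn0⟩ := Nat.mem_divisorsAntidiagonal.mp hp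
        have h1 : p.1 ≠ 0 := by
          intro h; rw [h, zero_mul] at hpn; exact hn hpn.symm
        have h2 : p.2 ≠ 0 := by
          intro h; rw [h, mul_zero] at hpn; exact hn hpn.symm
        have h1' : (p.1 : ℂ) ≠ 0 := Nat.cast_ne_zero.mpr h1
        have h2' : (p.2 : ℂ) ≠ 0 := Nat.cast_ne_zero.mpr h2
        have hncast : ((n:ℕ) : ℂ) = (p.1 : ℂ) * (p.2 : ℂ) := by exact_mod_cast hpn.symm
        simp only [hadef]
        rw [if_neg (by tauto), ← hpn]
        push_cast
        field_simp
      rw [Finset.sum_congr rfl step, ← Finset.sum_mul]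
      have hsum : ∑ p ∈ n.divisorsAntidiagonal, ((p.1 * B p.1 : ℕ) : ℂ)
          = ((∑ d ∈ n.divisors, d * B d : ℕ) : ℂ) := by
        rw [Nat.sum_divisorsAntidiagonal (f := fun d e => ((d * B d : ℕ) : ℂ))]
        push_cast
        rfl
      rw [hsum, hB n (by omega)]
      simp [hFdef, hn]
  have hFS : HasSum F S := hfib ▸ hcol
  -- evaluate the sum of F via Taylor series of -log
  have h1 : HasSum (fun n : ℕ => ((q:ℂ)*t)^n/n) (-Complex.log (1 - (q:ℂ)*t)) :=
    Complex.hasSum_taylorSeries_neg_log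
      (by rw [norm_mul, Complex.norm_natCast]; exact hqr)
  have h2 : HasSum (fun n : ℕ => t^n/n) (-Complex.log (1 - t)) :=
    Complex.hasSum_taylorSeries_neg_log (by exact hr1)
  have h3 : HasSum (fun n : ℕ => ∑ j, (ω j*t)^n/n) (∑ j, -Complex.log (1 - ω j*t)) :=
    hasSum_sum (fun j _ => Complex.hasSum_taylorSeries_neg_log
      (by exact hωt j))
  have hcomb := (h1.add h2).sub h3
  have hfun2 : (fun n : ℕ => (((q:ℂ)*t)^n/n + t^n/n) - ∑ j, (ω j*t)^n/n) = F := by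
    funext n
    rcases eq_or_ne n 0 with rfl | hn
    · simp [hFdef]
    · rw [hFdef]
      simp only [if_neg hn, mul_pow, sub_mul, add_mul, one_mul, sub_div, add_div,
        Finset.sum_mul, Finset.sum_div]
      simp only [mul_div_assoc]
  rw [hfun2] at hcomb
  have hSval : S = (-Complex.log (1 - (q:ℂ)*t) + -Complex.log (1 - t))
      - ∑ j, -Complex.log (1 - ω j*t) := hFS.unique hcomb
  -- conclude
  have hc1 : HasSum (fun k => c (k+1)) S := by
    have h0 : c 0 = 0 := by simp [hcdef]
    have h := (hasSum_nat_add_iff' 1).mpr hcS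
    rw [Finset.range_one, Finset.sum_singleton, h0, sub_zero] at h
    exact h
  have hp : HasProd (fun k => Complex.exp (c (k+1))) (Complex.exp S) := hc1.cexp
  have hfun3 : ∀ k : ℕ, Complex.exp (c (k+1)) = (1 - t ^ (k+1)) ^ (-(B (k+1) : ℤ)) := by
    intro k
    have hz := hne_tm (k+1) (by omega)
    rw [hcdef]
    simp only [Nat.succ_ne_zero, if_false]
    rw [Complex.exp_neg, Complex.exp_nat_mul, Complex.exp_log hz, zpow_neg, zpow_natCast]
  have hp' : HasProd (fun k : ℕ => (1 - t ^ (k+1)) ^ (-(B (k+1) : ℤ))) (Complex.exp S) := by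
    simpa only [hfun3] using hp
  refine ⟨hp'.multipliable, ?_⟩
  rw [hp'.tprod_eq, hSval]
  rw [Complex.exp_sub, Complex.exp_add, Complex.exp_neg, Complex.exp_neg,
    Complex.exp_log hne_qt, Complex.exp_log hne_t, Complex.exp_sum]
  have hprod : ∀ j ∈ Finset.univ, Complex.exp (-Complex.log (1 - ω j*t)) = (1 - ω j*t)⁻¹ :=
    fun j _ => by rw [Complex.exp_neg, Complex.exp_log (hne_ωt j)]
  rw [Finset.prod_congr rfl hprod, Finset.prod_inv_distrib, div_inv_eq_mul]
  have hprodne : (∏ j, (1 - ω j * t)) ≠ 0 := Finset.prod_ne_zero_iff.mpr (fun j _ => hne_ωt j)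
  field_simp
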